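/- arXiv:1506.03442 — 3 statements merged into one kernel-verified Lean document; each statement's English description precedes it below -/
import Mathlib

section
/- Let G be a finite simple graph. If λ(G) ≠ λ(Ḡ), then λ_g(G) = max{λ(G), λ(Ḡ)}. -/
open SimpleGraph

/-- `S` is a dominating set of `G`: every vertex outside `S` has a neighbor in `S`. -/
def isDomSet {α : Type*} (G : SimpleGraph α) (S : Set α) : Prop :=
  ∀ v ∉ S, ∃ u ∈ S, G.Adj v u

/-- `S` is a locating-dominating set (LD-set) of `G`. -/
def isLDSet {α : Type*} (G : SimpleGraph α) (S : Set α) : Prop :=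
  isDomSet G S ∧ ∀ u ∉ S, ∀ v ∉ S, u ≠ v →
    G.neighborSet u ∩ S ≠ G.neighborSet v ∩ S

/-- The location-domination number `λ(G)`. -/
noncomputable def ldNum {α : Type*} (G : SimpleGraph α) : ℕ :=
  sInf {n | ∃ S : Set α, isLDSet G S ∧ S.ncard = n}

/-- The global location-domination number `λ_g(G)`. -/
noncomputable def gldNum {α : Type*} (G : SimpleGraph α) : ℕ :=
  sInf {n | ∃ S : Set α, isLDSet G S ∧ isLDSet Gᶜ S ∧ S.ncard = n}

/-- `G` is bipartite with stable sets `U` and `W`. -/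
def bipartiteWith {α : Type*} (G : SimpleGraph α) (U W : Set α) : Prop :=
  U ∪ W = Set.univ ∧ Disjoint U W ∧
    ∀ ⦃u v : α⦄, G.Adj u v → (u ∈ U ∧ v ∈ W) ∨ (u ∈ W ∧ v ∈ U)

section Aux

variable {V : Type*} (G : SimpleGraph V)

lemma univ_LD : isLDSet G Set.univ := by
  constructor
  · intro v hv; exact absurd (Set.mem_univ v) hv
  · intro u hu; exact absurd (Set.mem_univ u) hu

variable {G}

lemma compl_nbr_inter {S : Set V} {u : V} (hu : u ∉ S) :
    Gᶜ.neighborSet u ∩ S = S \ (G.neighborSet u ∩ S) := by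
  ext w
  simp only [Set.mem_inter_iff, Set.mem_diff, mem_neighborSet, compl_adj]
  constructor
  · rintro ⟨⟨hne, hnadj⟩, hw⟩; exact ⟨hw, fun h => hnadj h.1⟩
  · rintro ⟨hw, hn⟩
    exact ⟨⟨fun h => hu (h ▸ hw), fun hadj => hn ⟨hadj, hw⟩⟩, hw⟩

lemma transfer_iff {S : Set V} {u v : V} (hu : u ∉ S) (hv : v ∉ S) :
    G.neighborSet u ∩ S = G.neighborSet v ∩ S ↔
      Gᶜ.neighborSet u ∩ S = Gᶜ.neighborSet v ∩ S := by
  rw [compl_nbr_inter hu, compl_nbr_inter hv]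
  constructor
  · intro h; rw [h]
  · intro h
    have hh := congrArg (fun t => S \ t) h
    rw [Set.diff_diff_cancel_left Set.inter_subset_right,
      Set.diff_diff_cancel_left Set.inter_subset_right] at hh
    exact hh

/-- the locating property is monotone under supersets -/
lemma loc_mono {H : SimpleGraph V} {S T : Set V}
    (hl : ∀ u ∉ S, ∀ v ∉ S, u ≠ v → H.neighborSet u ∩ S ≠ H.neighborSet v ∩ S)
    (hST : S ⊆ T) :
    ∀ u ∉ T, ∀ v ∉ T, u ≠ v → H.neighborSet u ∩ T ≠ H.neighborSet v ∩ T := by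
  intro u hu v hv hne heq
  refine hl u (fun hx => hu (hST hx)) v (fun hx => hv (hST hx)) hne ?_
  have : (H.neighborSet u ∩ T) ∩ S = (H.neighborSet v ∩ T) ∩ S := by rw [heq]
  rwa [Set.inter_assoc, Set.inter_eq_self_of_subset_right hST, Set.inter_assoc,
    Set.inter_eq_self_of_subset_right hST] at this

lemma exists_global {S : Set V} (hS : isLDSet G S) :
    ∃ T : Set V, isLDSet G T ∧ isLDSet Gᶜ T ∧ T.ncard ≤ S.ncard + 1 := by
  have hlocC : ∀ u ∉ S, ∀ v ∉ S, u ≠ v →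
      Gᶜ.neighborSet u ∩ S ≠ Gᶜ.neighborSet v ∩ S := by
    intro u hu v hv hne heq
    exact hS.2 u hu v hv hne ((transfer_iff hu hv).2 heq)
  by_cases hd : isDomSet Gᶜ S
  · exact ⟨S, hS, ⟨hd, hlocC⟩, Nat.le_succ _⟩
  · simp only [isDomSet, not_forall] at hd
    obtain ⟨u, hu, hufail⟩ := hd
    push_neg at hufail
    refine ⟨insert u S, ?_, ?_, Set.ncard_insert_le _ _⟩
    · constructor
      · intro v hv
        obtain ⟨w, hw, hadj⟩ := hS.1 v (fun hx => hv (Set.mem_insert_of_mem _ hx))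
        exact ⟨w, Set.mem_insert_of_mem _ hw, hadj⟩
      · exact loc_mono hS.2 (Set.subset_insert _ _)
    · constructor
      · intro v hv
        have hvS : v ∉ S := fun hx => hv (Set.mem_insert_of_mem _ hx)
        have hvu : v ≠ u := fun hx => hv (hx ▸ Set.mem_insert _ _)
        by_contra hcon
        push_neg at hcon
        have hvfail : ∀ w ∈ S, ¬ Gᶜ.Adj v w := fun w hw hadj =>
          hcon w (Set.mem_insert_of_mem _ hw) hadj
        have hempty : Gᶜ.neighborSet v ∩ S = Gᶜ.neighborSet u ∩ S := by
          ext w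
          simp only [Set.mem_inter_iff, mem_neighborSet]
          constructor
          · rintro ⟨hadj, hw⟩; exact absurd hadj (hvfail w hw)
          · rintro ⟨hadj, hw⟩; exact absurd hadj (hufail w hw)
        exact hS.2 v hvS u hu hvu ((transfer_iff hvS hu).2 hempty)
      · exact loc_mono hlocC (Set.subset_insert _ _)

variable (G)

lemma gld_nonempty : {n | ∃ S : Set V, isLDSet G S ∧ isLDSet Gᶜ S ∧ S.ncard = n}.Nonempty := by
  obtain ⟨T, h1, h2, _⟩ := exists_global (univ_LD G)
  exact ⟨T.ncard, T, h1, h2, rfl⟩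

lemma ld_le_gld : ldNum G ≤ gldNum G := by
  obtain ⟨S, h1, h2, h3⟩ := Nat.sInf_mem (gld_nonempty G)
  calc ldNum G ≤ S.ncard := Nat.sInf_le ⟨S, h1, rfl⟩
    _ = gldNum G := h3

lemma ldc_le_gld : ldNum Gᶜ ≤ gldNum G := by
  obtain ⟨S, h1, h2, h3⟩ := Nat.sInf_mem (gld_nonempty G)
  calc ldNum Gᶜ ≤ S.ncard := Nat.sInf_le ⟨S, h2, rfl⟩
    _ = gldNum G := h3

lemma gld_le_ld_succ : gldNum G ≤ ldNum G + 1 := by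
  obtain ⟨S, hS, hcard⟩ := Nat.sInf_mem (⟨_, Set.univ, univ_LD G, rfl⟩ :
    {n | ∃ S : Set V, isLDSet G S ∧ S.ncard = n}.Nonempty)
  obtain ⟨T, h1, h2, h3⟩ := exists_global hS
  calc gldNum G ≤ T.ncard := Nat.sInf_le ⟨T, h1, h2, rfl⟩
    _ ≤ S.ncard + 1 := h3
    _ = ldNum G + 1 := by rw [hcard]; rfl

lemma gld_compl : gldNum Gᶜ = gldNum G := by
  unfold gldNum
  congr 1
  ext n
  constructor
  · rintro ⟨S, h1, h2, h3⟩
    rw [compl_compl] at h2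
    exact ⟨S, h2, h1, h3⟩
  · rintro ⟨S, h1, h2, h3⟩
    exact ⟨S, h2, by rwa [compl_compl], h3⟩

lemma main_aux (hlt : ldNum G < ldNum Gᶜ) : gldNum G = ldNum Gᶜ := by
  have h1 := ldc_le_gld G
  have h2 := gld_le_ld_succ G
  omega

end Aux

theorem stmt6 {V : Type*} [Fintype V] (G : SimpleGraph V)
    (h : ldNum G ≠ ldNum Gᶜ) :
    gldNum G = max (ldNum G) (ldNum Gᶜ) := by
  rcases lt_or_gt_of_ne h with hlt | hgt
  · rw [main_aux G hlt, max_eq_right hlt.le]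
  · have := main_aux Gᶜ (by rwa [compl_compl])
    rw [gld_compl] at this
    rw [this, compl_compl, max_eq_left hgt.le]
end

section
/- Let G be a finite simple graph. Then λ_g(G) = λ(G) + 1 if and only if no LD-code of G is a global LD-set (i.e., every LD-set of G of cardinality λ(G) fails to be an LD-set of Ḡ). -/
open SimpleGraph

lemma ld_univ {α : Type*} (G : SimpleGraph α) : isLDSet G Set.univ := by
  constructor
  · intro v hv; exact absurd (Set.mem_univ v) hv
  · intro u hu; exact absurd (Set.mem_univ u) hu

/-- the locating condition is preserved by inserting a vertex -/
lemma loc_insert {α : Type*} {G : SimpleGraph α} {S : Set α}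
    (hl : ∀ u ∉ S, ∀ v ∉ S, u ≠ v → G.neighborSet u ∩ S ≠ G.neighborSet v ∩ S) (x : α) :
    ∀ u ∉ insert x S, ∀ v ∉ insert x S, u ≠ v →
      G.neighborSet u ∩ insert x S ≠ G.neighborSet v ∩ insert x S := by
  intro u hu v hv huv heq
  have hu' : u ∉ S := fun h => hu (Set.mem_insert_of_mem _ h)
  have hv' : v ∉ S := fun h => hv (Set.mem_insert_of_mem _ h)
  apply hl u hu' v hv' huv
  have h2 := congrArg (· ∩ S) heq
  simp only [Set.inter_assoc] at h2
  rwa [Set.inter_eq_right.mpr (Set.subset_insert x S)] at h2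

lemma ld_insert {α : Type*} {G : SimpleGraph α} {S : Set α} (h : isLDSet G S) (x : α) :
    isLDSet G (insert x S) := by
  refine ⟨?_, loc_insert h.2 x⟩
  intro v hv
  obtain ⟨u, hu, hadj⟩ := h.1 v (fun hvS => hv (Set.mem_insert_of_mem _ hvS))
  exact ⟨u, Set.mem_insert_of_mem _ hu, hadj⟩

/-- the locating condition holds automatically in the complement -/
lemma ld_compl_loc {α : Type*} {G : SimpleGraph α} {S : Set α} (h : isLDSet G S) :
    ∀ u ∉ S, ∀ v ∉ S, u ≠ v → Gᶜ.neighborSet u ∩ S ≠ Gᶜ.neighborSet v ∩ S := by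
  intro u hu v hv huv heq
  apply h.2 u hu v hv huv
  ext w
  simp only [Set.mem_inter_iff, mem_neighborSet]
  constructor
  · rintro ⟨hadj, hwS⟩
    refine ⟨?_, hwS⟩
    by_contra hnadj
    have hw1 : w ∈ Gᶜ.neighborSet v ∩ S := ⟨⟨fun hwv => hv (hwv ▸ hwS), hnadj⟩, hwS⟩
    rw [← heq] at hw1
    exact hw1.1.2 hadj
  · rintro ⟨hadj, hwS⟩
    refine ⟨?_, hwS⟩
    by_contra hnadj
    have hw1 : w ∈ Gᶜ.neighborSet u ∩ S := ⟨⟨fun hwu => hu (hwu ▸ hwS), hnadj⟩, hwS⟩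
    rw [heq] at hw1
    exact hw1.1.2 hadj

theorem stmt7 {V : Type*} [Fintype V] (G : SimpleGraph V) :
    gldNum G = ldNum G + 1 ↔
      ∀ S : Set V, isLDSet G S → S.ncard = ldNum G → ¬ isLDSet Gᶜ S := by
  have hne : {n | ∃ S : Set V, isLDSet G S ∧ S.ncard = n}.Nonempty :=
    ⟨(Set.univ : Set V).ncard, Set.univ, ld_univ G, rfl⟩
  obtain ⟨S₀, hS₀, hS₀card'⟩ := Nat.sInf_mem hne
  have hS₀card : S₀.ncard = ldNum G := hS₀card'
  have hle : ldNum G ≤ gldNum G := by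
    have hgne : {n | ∃ S : Set V, isLDSet G S ∧ isLDSet Gᶜ S ∧ S.ncard = n}.Nonempty :=
      ⟨(Set.univ : Set V).ncard, Set.univ, ld_univ G, ld_univ Gᶜ, rfl⟩
    obtain ⟨T, hT, hTc, hTcard⟩ := Nat.sInf_mem hgne
    have hTcard' : T.ncard = gldNum G := hTcard
    calc ldNum G ≤ T.ncard := Nat.sInf_le ⟨T, hT, rfl⟩
      _ = gldNum G := hTcard' 
  -- gldNum ≤ ldNum + 1
  have key : gldNum G ≤ ldNum G + 1 := by
    by_cases hc : isLDSet Gᶜ S₀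
    · calc gldNum G ≤ S₀.ncard := Nat.sInf_le ⟨S₀, hS₀, hc, rfl⟩
        _ ≤ ldNum G + 1 := by omega
    · have hx : ∃ x, x ∉ S₀ ∧ ∀ u ∈ S₀, G.Adj x u := by
        by_contra hx
        push_neg at hx
        refine hc ⟨fun v hv => ?_, ld_compl_loc hS₀⟩
        obtain ⟨u, hu, hnadj⟩ := hx v hv
        exact ⟨u, hu, ⟨fun hvu => hv (hvu ▸ hu), hnadj⟩⟩
      obtain ⟨x, hxS, hxadj⟩ := hx
      have hTld : isLDSet G (insert x S₀) := ld_insert hS₀ x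
      have hTldc : isLDSet Gᶜ (insert x S₀) := by
        refine ⟨?_, loc_insert (ld_compl_loc hS₀) x⟩
        intro v hv
        have hvS : v ∉ S₀ := fun h => hv (Set.mem_insert_of_mem _ h)
        have hvx : v ≠ x := fun h => hv (h ▸ Set.mem_insert x S₀)
        -- v must have a non-neighbor in S₀, else it would have the same
        -- S₀-neighborhood as x, contradicting locating
        by_contra hcon
        push_neg at hcon
        apply hS₀.2 v hvS x hxS hvx
        ext w
        simp only [Set.mem_inter_iff, mem_neighborSet]
        constructor
        · rintro ⟨_, hwS⟩; exact ⟨hxadj w hwS, hwS⟩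
        · rintro ⟨_, hwS⟩
          refine ⟨?_, hwS⟩
          have := hcon w (Set.mem_insert_of_mem _ hwS)
          rw [compl_adj] at this
          push_neg at this
          exact this (fun hvw => hvS (hvw ▸ hwS))
      have hcard : (insert x S₀).ncard = ldNum G + 1 := by
        rw [Set.ncard_insert_of_notMem hxS (Set.toFinite S₀), hS₀card]
      calc gldNum G ≤ (insert x S₀).ncard := Nat.sInf_le ⟨insert x S₀, hTld, hTldc, rfl⟩
        _ = ldNum G + 1 := hcard
  constructor
  · intro heq S hS hScard hSc
    have h2 : gldNum G ≤ S.ncard := Nat.sInf_le ⟨S, hS, hSc, rfl⟩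
    rw [hScard] at h2
    omega
  · intro hall
    rcases Nat.lt_or_ge (gldNum G) (ldNum G + 1) with h | h
    · exfalso
      have hgeq : gldNum G = ldNum G := le_antisymm (by omega) hle
      have hgne : {n | ∃ S : Set V, isLDSet G S ∧ isLDSet Gᶜ S ∧ S.ncard = n}.Nonempty :=
        ⟨(Set.univ : Set V).ncard, Set.univ, ld_univ G, ld_univ Gᶜ, rfl⟩
      obtain ⟨T, hT, hTc, hTcard⟩ := Nat.sInf_mem hgne
      have hTcard' : T.ncard = gldNum G := hTcard
      exact hall T hT (hTcard'.trans hgeq) hTc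
    · omega
end

section
/- Let G be a connected bipartite graph of order n = r + s ≥ 4 whose vertex set is partitioned into stable sets U and W with |U| = r ≤ s = |W|. If r ≥ 3 and λ(Ḡ) = λ(G) + 1, then 3r/2 ≤ s ≤ 2^r − 1 (i.e., 3r ≤ 2s and s ≤ 2^r − 1). -/
open SimpleGraph

namespace LDComb

variable {α : Type*} [DecidableEq α]

/-- `y` is the lower endpoint of a `u`-edge in the family `A`. -/
def uEdge (A : Finset (Finset α)) (u : α) (y : Finset α) : Prop :=
  u ∉ y ∧ y ∈ A ∧ insert u y ∈ A

/-- The direction `u` is good for the family `A`. -/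
def Good (A : Finset (Finset α)) (u : α) : Prop :=
  (∃ y₁ y₂ : Finset α, uEdge A u y₁ ∧ uEdge A u y₂ ∧ y₁ ≠ y₂) ∨
    (({u} : Finset α) ∈ A ∧ ∃ y, uEdge A u y)

/-- Down-compression of one set in direction `d` relative to the family `A`. -/
def shf (A : Finset (Finset α)) (d : α) (x : Finset α) : Finset α :=
  if d ∈ x ∧ x.erase d ∉ A ∧ (x.erase d).Nonempty then x.erase d else x

lemma shf_of_not_mem {A : Finset (Finset α)} {d : α} {x : Finset α} (h : d ∉ x) :
    shf A d x = x := by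
  unfold shf; rw [if_neg]; tauto

lemma shf_of_mem_A {A : Finset (Finset α)} {d : α} {x : Finset α} (h : x.erase d ∈ A) :
    shf A d x = x := by
  unfold shf; rw [if_neg]; tauto

lemma shf_of_not_nonempty {A : Finset (Finset α)} {d : α} {x : Finset α}
    (h : ¬ (x.erase d).Nonempty) : shf A d x = x := by
  unfold shf; rw [if_neg]; tauto

lemma shf_spec (A : Finset (Finset α)) (d : α) (x : Finset α) :
    shf A d x = x ∨ (d ∈ x ∧ x.erase d ∉ A ∧ (x.erase d).Nonempty ∧ shf A d x = x.erase d) := by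
  unfold shf
  by_cases h : d ∈ x ∧ x.erase d ∉ A ∧ (x.erase d).Nonempty
  · right; rw [if_pos h]; tauto
  · left; rw [if_neg h]

lemma shf_nonempty {A : Finset (Finset α)} {d : α} {x : Finset α} (h : x.Nonempty) :
    (shf A d x).Nonempty := by
  rcases shf_spec A d x with h1 | ⟨_, _, h3, h4⟩
  · rwa [h1]
  · rwa [h4]

lemma shf_injOn (A : Finset (Finset α)) (d : α) :
    ∀ x₁ ∈ A, ∀ x₂ ∈ A, shf A d x₁ = shf A d x₂ → x₁ = x₂ := by
  intro x₁ h₁ x₂ h₂ heq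
  rcases shf_spec A d x₁ with e1 | ⟨m1, n1, _, e1⟩ <;>
    rcases shf_spec A d x₂ with e2 | ⟨m2, n2, _, e2⟩
  · rw [e1, e2] at heq; exact heq
  · rw [e1, e2] at heq; exact absurd (heq ▸ h₁) n2
  · rw [e1, e2] at heq; exact absurd (heq.symm ▸ h₂) n1
  · rw [e1, e2] at heq
    ext a
    by_cases ha : a = d
    · subst ha; simp [m1, m2]
    · constructor <;> intro hmem
      · have : a ∈ x₁.erase d := Finset.mem_erase.2 ⟨ha, hmem⟩
        rw [heq] at this; exact (Finset.mem_erase.1 this).2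
      · have : a ∈ x₂.erase d := Finset.mem_erase.2 ⟨ha, hmem⟩
        rw [← heq] at this; exact (Finset.mem_erase.1 this).2

lemma mem_image_shf {A : Finset (Finset α)} {d : α} {x : Finset α} (h : x ∈ A) :
    shf A d x ∈ A.image (shf A d) :=
  Finset.mem_image_of_mem _ h

lemma erase_inj_of_mem {d : α} {y₁ y₂ : Finset α} (h1 : d ∈ y₁) (h2 : d ∈ y₂)
    (h : y₁.erase d = y₂.erase d) : y₁ = y₂ := by
  ext a
  by_cases ha : a = d
  · subst ha; simp [h1, h2]
  · constructor <;> intro hmem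
    · have : a ∈ y₁.erase d := Finset.mem_erase.2 ⟨ha, hmem⟩
      rw [h] at this; exact (Finset.mem_erase.1 this).2
    · have : a ∈ y₂.erase d := Finset.mem_erase.2 ⟨ha, hmem⟩
      rw [← h] at this; exact (Finset.mem_erase.1 this).2

section Transfer

variable {A : Finset (Finset α)} {d u : α} {y : Finset α}

/-- Transfer of a `u`-edge along the compression in direction `d`, `u ≠ d`. -/
lemma edge_transfer (hud : u ≠ d) (h : uEdge A u y) :
    uEdge (A.image (shf A d)) u y ∨
    (uEdge (A.image (shf A d)) u (y.erase d) ∧ d ∈ y ∧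
      (y.erase d ∉ A ∨ insert u (y.erase d) ∉ A)) ∨
    (y = {d} ∧ ({u} : Finset α) ∈ A.image (shf A d) ∧ ({u} : Finset α) ∉ A) := by
  obtain ⟨hu, hyA, hxA⟩ := h
  set A' := A.image (shf A d) with hA'
  have hxer : (insert u y).erase d = insert u (y.erase d) := Finset.erase_insert_of_ne hud
  by_cases hdy : d ∈ y
  · have hdx : d ∈ insert u y := Finset.mem_insert_of_mem hdy
    by_cases hyne : (y.erase d).Nonempty
    · by_cases hyer : y.erase d ∈ A
      · -- y stays
        have hsy : shf A d y = y := shf_of_mem_A hyer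
        by_cases hxe : (insert u y).erase d ∈ A
        · -- x stays as well
          left
          refine ⟨hu, ?_, ?_⟩
          · rw [← hsy]; exact mem_image_shf hyA
          · have : shf A d (insert u y) = insert u y := shf_of_mem_A hxe
            rw [← this]; exact mem_image_shf hxA
        · -- x shifts
          right; left
          have hxne : ((insert u y).erase d).Nonempty := by
            rw [hxer]; exact ⟨u, Finset.mem_insert_self _ _⟩
          have hsx : shf A d (insert u y) = insert u (y.erase d) := by
            unfold shf; rw [if_pos ⟨hdx, hxe, hxne⟩]; exact hxer
          refine ⟨⟨fun hc => hu (Finset.mem_of_mem_erase hc), ?_, ?_⟩, hdy, Or.inr ?_⟩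
          · have : shf A d (y.erase d) = y.erase d :=
              shf_of_not_mem (Finset.notMem_erase _ _)
            rw [← this]; exact mem_image_shf hyer
          · rw [← hsx]; exact mem_image_shf hxA
          · rwa [← hxer]
      · -- y shifts
        have hsy : shf A d y = y.erase d := by
          unfold shf; rw [if_pos ⟨hdy, hyer, hyne⟩]
        right; left
        refine ⟨⟨fun hc => hu (Finset.mem_of_mem_erase hc), ?_, ?_⟩, hdy, Or.inl hyer⟩
        · rw [← hsy]; exact mem_image_shf hyA
        · by_cases hxe : (insert u y).erase d ∈ A
          · have : shf A d ((insert u y).erase d) = (insert u y).erase d :=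
              shf_of_not_mem (Finset.notMem_erase _ _)
            rw [← hxer, ← this]; exact mem_image_shf hxe
          · have hxne : ((insert u y).erase d).Nonempty := by
              rw [hxer]; exact ⟨u, Finset.mem_insert_self _ _⟩
            have hsx : shf A d (insert u y) = insert u (y.erase d) := by
              unfold shf; rw [if_pos ⟨hdx, hxe, hxne⟩]; exact hxer
            rw [← hsx]; exact mem_image_shf hxA
    · -- y = {d}
      have hyd : y = {d} := by
        apply Finset.eq_singleton_iff_unique_mem.2
        refine ⟨hdy, fun a ha => ?_⟩
        by_contra had
        exact hyne ⟨a, Finset.mem_erase.2 ⟨had, ha⟩⟩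
      have hsy : shf A d y = y := shf_of_not_nonempty hyne
      have hxeu : (insert u y).erase d = {u} := by
        rw [hxer, hyd]; simp
      by_cases huA : ({u} : Finset α) ∈ A
      · -- x stays
        left
        refine ⟨hu, ?_, ?_⟩
        · rw [← hsy]; exact mem_image_shf hyA
        · have : shf A d (insert u y) = insert u y := shf_of_mem_A (hxeu ▸ huA)
          rw [← this]; exact mem_image_shf hxA
      · -- x shifts to {u}
        right; right
        refine ⟨hyd, ?_, huA⟩
        have hxne : ((insert u y).erase d).Nonempty := by
          rw [hxeu]; exact ⟨u, Finset.mem_singleton_self _⟩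
        have hsx : shf A d (insert u y) = {u} := by
          unfold shf; rw [if_pos ⟨hdx, hxeu ▸ huA, hxne⟩]; exact hxeu
        rw [← hsx]; exact mem_image_shf hxA
  · -- d ∉ y, both endpoints untouched
    left
    have hdx : d ∉ insert u y := by
      rw [Finset.mem_insert]; rintro (h | h); exacts [hud h.symm, hdy h]
    refine ⟨hu, ?_, ?_⟩
    · rw [← shf_of_not_mem (A := A) hdy]; exact mem_image_shf hyA
    · rw [← shf_of_not_mem (A := A) hdx]; exact mem_image_shf hxA

lemma edge_transfer_d (h : uEdge A d y) : uEdge (A.image (shf A d)) d y := by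
  obtain ⟨hu, hyA, hxA⟩ := h
  refine ⟨hu, ?_, ?_⟩
  · rw [← shf_of_not_mem (A := A) hu]; exact mem_image_shf hyA
  · have : shf A d (insert d y) = insert d y := shf_of_mem_A (by rwa [Finset.erase_insert hu])
    rw [← this]; exact mem_image_shf hxA

lemma leaf_transfer (hud : u ≠ d) (h : ({u} : Finset α) ∈ A) :
    ({u} : Finset α) ∈ A.image (shf A d) := by
  have : shf A d {u} = {u} := shf_of_not_mem (by simp [Ne.symm hud])
  rw [← this]; exact mem_image_shf h

/-- Goodness is preserved by compression. -/
lemma good_shf (hg : Good A u) : Good (A.image (shf A d)) u := by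
  by_cases hud : u = d
  · subst hud
    rcases hg with ⟨y₁, y₂, h₁, h₂, hne⟩ | ⟨hleaf, y, hy⟩
    · exact Or.inl ⟨y₁, y₂, edge_transfer_d h₁, edge_transfer_d h₂, hne⟩
    · refine Or.inr ⟨?_, y, edge_transfer_d hy⟩
      have : shf A u {u} = {u} := shf_of_not_nonempty (by simp)
      rw [← this]; exact mem_image_shf hleaf
  · rcases hg with ⟨y₁, y₂, h₁, h₂, hne⟩ | ⟨hleaf, y, hy⟩
    · -- two distinct edges
      rcases edge_transfer hud h₁ with e1 | ⟨e1, hd1, hc1⟩ | ⟨hy1, hu1, hu1'⟩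
      · rcases edge_transfer hud h₂ with e2 | ⟨e2, hd2, hc2⟩ | ⟨hy2, hu2, hu2'⟩
        · exact Or.inl ⟨y₁, y₂, e1, e2, hne⟩
        · by_cases hcol : y₁ = y₂.erase d
          · exfalso
            rcases hc2 with hc | hc
            · exact hc (hcol ▸ h₁.2.1)
            · exact hc (hcol ▸ h₁.2.2)
          · exact Or.inl ⟨y₁, y₂.erase d, e1, e2, hcol⟩
        · exact Or.inr ⟨hu2, y₁, e1⟩
      · rcases edge_transfer hud h₂ with e2 | ⟨e2, hd2, hc2⟩ | ⟨hy2, hu2, hu2'⟩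
        · by_cases hcol : y₂ = y₁.erase d
          · exfalso
            rcases hc1 with hc | hc
            · exact hc (hcol ▸ h₂.2.1)
            · exact hc (hcol ▸ h₂.2.2)
          · exact Or.inl ⟨y₁.erase d, y₂, e1, e2, fun hh => hcol hh.symm⟩
        · by_cases hcol : y₁.erase d = y₂.erase d
          · exact absurd (erase_inj_of_mem hd1 hd2 hcol) hne
          · exact Or.inl ⟨y₁.erase d, y₂.erase d, e1, e2, hcol⟩
        · exact Or.inr ⟨hu2, y₁.erase d, e1⟩
      · rcases edge_transfer hud h₂ with e2 | ⟨e2, hd2, hc2⟩ | ⟨hy2, hu2, hu2'⟩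
        · exact Or.inr ⟨hu1, y₂, e2⟩
        · exact Or.inr ⟨hu1, y₂.erase d, e2⟩
        · exact absurd (hy1.trans hy2.symm) hne
    · -- leaf and an edge
      rcases edge_transfer hud hy with e | ⟨e, _, _⟩ | ⟨_, _, hnl⟩
      · exact Or.inr ⟨leaf_transfer hud hleaf, y, e⟩
      · exact Or.inr ⟨leaf_transfer hud hleaf, y.erase d, e⟩
      · exact absurd hleaf hnl

end Transfer

end LDComb

namespace Main

variable {α : Type*} [DecidableEq α]

open LDComb

/-- In a stable (downward-closed) family, any nonempty subset of a member is a member. -/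
lemma downward (A : Finset (Finset α))
    (hstab : ∀ x ∈ A, ∀ d ∈ x, (x.erase d).Nonempty → x.erase d ∈ A) :
    ∀ k, ∀ x ∈ A, x.card ≤ k → ∀ s ⊆ x, s.Nonempty → s ∈ A := by
  intro k
  induction k with
  | zero =>
    intro x hx hc s hs hsne
    have : s.card = 0 := Nat.le_zero.1 ((Finset.card_le_card hs).trans hc)
    exact absurd (Finset.card_eq_zero.1 this) (Finset.nonempty_iff_ne_empty.1 hsne)
  | succ k ih =>
    intro x hx hc s hs hsne
    by_cases hsx : s = x
    · rwa [hsx]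
    · have hss : s ⊂ x := Finset.ssubset_iff_subset_ne.2 ⟨hs, hsx⟩
      obtain ⟨v, hvx, hvs⟩ := Finset.exists_of_ssubset hss
      have hsub : s ⊆ x.erase v := Finset.subset_erase.2 ⟨hs, hvs⟩
      have herA : x.erase v ∈ A := hstab x hx v hvx (hsne.mono hsub)
      refine ih (x.erase v) herA ?_ s hsub hsne
      have : (x.erase v).card < x.card := Finset.card_erase_lt_of_mem hvx
      omega

/-- The main combinatorial lemma: if every direction of `U` is good for a family `A` of
distinct nonempty sets, then `3 * |U| ≤ 2 * |A|`. -/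
theorem comb_main : ∀ (N : ℕ) (A : Finset (Finset α)) (U : Finset α),
    A.sum Finset.card ≤ N → (∅ : Finset α) ∉ A → (∀ u ∈ U, Good A u) →
    3 * U.card ≤ 2 * A.card := by
  intro N
  induction N with
  | zero =>
    intro A U hsum hne hgood
    -- every member is nonempty yet total size is 0, so A = ∅; then U = ∅.
    have hA : A = ∅ := by
      by_contra hA
      obtain ⟨x, hx⟩ := Finset.nonempty_iff_ne_empty.2 hA
      have hxne : x.Nonempty := Finset.nonempty_iff_ne_empty.2 (fun h => hne (h ▸ hx))
      have : 1 ≤ x.card := Finset.card_pos.2 hxne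
      have hle : x.card ≤ A.sum Finset.card := Finset.single_le_sum (fun _ _ => Nat.zero_le _) hx
      omega
    subst hA
    have hU : U = ∅ := by
      by_contra hU
      obtain ⟨u, hu⟩ := Finset.nonempty_iff_ne_empty.2 hU
      rcases hgood u hu with ⟨y, _, ⟨_, hy, _⟩, _, _⟩ | ⟨hy, _⟩ <;> simp at hy
    simp [hU]
  | succ N ih =>
    intro A U hsum hne hgood
    by_cases hstab : ∃ x ∈ A, ∃ d ∈ x, x.erase d ∉ A ∧ (x.erase d).Nonempty
    · -- compression step
      obtain ⟨x₀, hx₀, d, hd, hnA, hnon⟩ := hstab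
      set A' := A.image (shf A d) with hA'
      have hinj := shf_injOn A d
      have hcard : A'.card = A.card := Finset.card_image_of_injOn hinj
      have hsum' : A'.sum Finset.card < A.sum Finset.card := by
        rw [hA', Finset.sum_image hinj]
        have h1 : ∀ i ∈ A, (shf A d i).card ≤ i.card := by
          intro i _
          rcases shf_spec A d i with h | ⟨_, _, _, h⟩
          · rw [h]
          · rw [h]; exact Finset.card_le_card (Finset.erase_subset _ _)
        have h2 : ∃ i ∈ A, (shf A d i).card < i.card := by
          refine ⟨x₀, hx₀, ?_⟩
          have hx : shf A d x₀ = x₀.erase d := by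
            unfold shf; rw [if_pos ⟨hd, hnA, hnon⟩]
          rw [hx]
          exact Finset.card_erase_lt_of_mem hd
        exact Finset.sum_lt_sum h1 h2
      have hne' : (∅ : Finset α) ∉ A' := by
        rw [hA']
        intro hmem
        obtain ⟨x, hx, hfx⟩ := Finset.mem_image.1 hmem
        have hxne : x.Nonempty := Finset.nonempty_iff_ne_empty.2 (fun h => hne (h ▸ hx))
        exact Finset.nonempty_iff_ne_empty.1 (shf_nonempty hxne) hfx
      have hgood' : ∀ u ∈ U, Good A' u := fun u hu => good_shf (hgood u hu)
      have := ih A' U (by omega) hne' hgood'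
      omega
    · -- stable case
      push_neg at hstab
      have hstab' : ∀ x ∈ A, ∀ d ∈ x, (x.erase d).Nonempty → x.erase d ∈ A := by
        intro x hx d hd h1
        by_contra hcon
        exact Finset.nonempty_iff_ne_empty.1 h1 (hstab x hx d hd hcon)
      have hdc : ∀ x ∈ A, ∀ s ⊆ x, s.Nonempty → s ∈ A := by
        intro x hx s hs hsne
        exact downward A hstab' x.card x hx le_rfl s hs hsne
      -- every u ∈ U has its singleton and a pair in A
      have hsing : ∀ u ∈ U, ({u} : Finset α) ∈ A := by
        intro u hu
        have hedge : ∃ y, uEdge A u y := by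
          rcases hgood u hu with ⟨y, _, h, _, _⟩ | ⟨_, y, h⟩ <;> exact ⟨y, h⟩
        obtain ⟨y, _, hyA, hxA⟩ := hedge
        exact hdc _ hxA {u} (Finset.singleton_subset_iff.2 (Finset.mem_insert_self _ _))
          ⟨u, Finset.mem_singleton_self _⟩
      have hpair : ∀ u ∈ U, ∃ p ∈ A, p.card = 2 ∧ u ∈ p := by
        intro u hu
        have hedge : ∃ y, uEdge A u y := by
          rcases hgood u hu with ⟨y, _, h, _, _⟩ | ⟨_, y, h⟩ <;> exact ⟨y, h⟩
        obtain ⟨y, huy, hyA, hxA⟩ := hedge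
        have hyne : y.Nonempty := Finset.nonempty_iff_ne_empty.2 (fun h => hne (h ▸ hyA))
        obtain ⟨v, hv⟩ := hyne
        have huv : u ≠ v := fun h => huy (h ▸ hv)
        refine ⟨{u, v}, hdc _ hxA _ ?_ ⟨u, by simp⟩, ?_, by simp⟩
        · intro a ha
          rcases Finset.mem_insert.1 ha with h | h
          · exact h ▸ Finset.mem_insert_self _ _
          · rw [Finset.mem_singleton.1 h]; exact Finset.mem_insert_of_mem hv
        · rw [Finset.card_insert_of_notMem (by simp [huv]), Finset.card_singleton]
      -- counting
      set S1 := A.filter (fun z => z.card = 1) with hS1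
      set P2 := A.filter (fun z => z.card = 2) with hP2
      have hU1 : U.card ≤ S1.card := by
        apply Finset.card_le_card_of_injOn (fun u => {u})
        · intro u hu
          rw [Finset.mem_coe, hS1, Finset.mem_filter]
          exact ⟨hsing u hu, Finset.card_singleton u⟩
        · intro a _ b _ h
          exact Finset.singleton_injective h
      have hU2 : U.card ≤ 2 * P2.card := by
        have hsub : U ⊆ P2.biUnion id := by
          intro u hu
          obtain ⟨p, hp, hpc, hup⟩ := hpair u hu
          exact Finset.mem_biUnion.2 ⟨p, Finset.mem_filter.2 ⟨hp, hpc⟩, hup⟩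
        calc U.card ≤ (P2.biUnion id).card := Finset.card_le_card hsub
          _ ≤ ∑ p ∈ P2, p.card := Finset.card_biUnion_le
          _ = ∑ p ∈ P2, 2 := Finset.sum_congr rfl (fun p hp => (Finset.mem_filter.1 hp).2)
          _ = 2 * P2.card := by rw [Finset.sum_const, smul_eq_mul, Nat.mul_comm]
      have hSP : S1.card + P2.card ≤ A.card := by
        have hdisj : Disjoint S1 P2 := by
          rw [Finset.disjoint_left]
          intro z hz1 hz2
          rw [hS1, Finset.mem_filter] at hz1
          rw [hP2, Finset.mem_filter] at hz2
          omega
        calc S1.card + P2.card = (S1 ∪ P2).card := (Finset.card_union_of_disjoint hdisj).symm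
          _ ≤ A.card := Finset.card_le_card (Finset.union_subset
              (Finset.filter_subset _ _) (Finset.filter_subset _ _))
      omega

end Main

section Graph
set_option linter.unusedSectionVars false

variable {V : Type*} [Fintype V]

lemma isLDSet_univ (G : SimpleGraph V) : isLDSet G Set.univ := by
  constructor
  · intro v hv; exact absurd (Set.mem_univ v) hv
  · intro u hu; exact absurd (Set.mem_univ u) hu

lemma ldNum_exists (G : SimpleGraph V) : ∃ S : Set V, isLDSet G S ∧ S.ncard = ldNum G := by
  have hne : {n | ∃ S : Set V, isLDSet G S ∧ S.ncard = n}.Nonempty :=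
    ⟨(Set.univ : Set V).ncard, Set.univ, isLDSet_univ G, rfl⟩
  exact Nat.sInf_mem hne

lemma ldNum_le (G : SimpleGraph V) {S : Set V} (h : isLDSet G S) : ldNum G ≤ S.ncard :=
  Nat.sInf_le ⟨S, h, rfl⟩

/-- Every minimum LD-set of a bipartite graph with `λ(Ḡ) = λ(G)+1` is one of the two parts. -/
lemma min_ld_part {G : SimpleGraph V} {U W : Set V} (hbip : bipartiteWith G U W)
    (hlam : ldNum Gᶜ = ldNum G + 1) :
    ∀ T : Set V, isLDSet G T → T.ncard = ldNum G → T = U ∨ T = W := by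
  obtain ⟨huniv, hdisj, hadj⟩ := hbip
  intro T hT hTc
  have hnc : ¬ isLDSet Gᶜ T := by
    intro h
    have := ldNum_le Gᶜ h
    omega
  have hsep : ∀ u ∉ T, ∀ v ∉ T, u ≠ v →
      Gᶜ.neighborSet u ∩ T ≠ Gᶜ.neighborSet v ∩ T := by
    intro u hu v hv huv hEq
    apply hT.2 u hu v hv huv
    ext x
    simp only [Set.mem_inter_iff, mem_neighborSet]
    constructor
    · rintro ⟨hax, hxT⟩
      have hxu : x ≠ u := fun h => hu (h ▸ hxT)
      have hxv : x ≠ v := fun h => hv (h ▸ hxT)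
      have h1 : x ∉ Gᶜ.neighborSet u ∩ T := by
        intro hmem
        exact (compl_adj G u x).1 hmem.1 |>.2 hax
      rw [hEq] at h1
      have h2 : Gᶜ.Adj v x ∨ G.Adj v x := by
        by_cases hg : G.Adj v x
        · exact Or.inr hg
        · exact Or.inl ((compl_adj G v x).2 ⟨Ne.symm hxv, hg⟩)
      rcases h2 with h2 | h2
      · exact absurd ⟨h2, hxT⟩ h1
      · exact ⟨h2, hxT⟩
    · rintro ⟨hax, hxT⟩
      have hxu : x ≠ u := fun h => hu (h ▸ hxT)
      have hxv : x ≠ v := fun h => hv (h ▸ hxT)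
      have h1 : x ∉ Gᶜ.neighborSet v ∩ T := by
        intro hmem
        exact (compl_adj G v x).1 hmem.1 |>.2 hax
      rw [← hEq] at h1
      have h2 : Gᶜ.Adj u x ∨ G.Adj u x := by
        by_cases hg : G.Adj u x
        · exact Or.inr hg
        · exact Or.inl ((compl_adj G u x).2 ⟨Ne.symm hxu, hg⟩)
      rcases h2 with h2 | h2
      · exact absurd ⟨h2, hxT⟩ h1
      · exact ⟨h2, hxT⟩
  have hdom : ∃ u ∉ T, ∀ y ∈ T, G.Adj u y := by
    have hnd : ¬ isDomSet Gᶜ T := fun hd => hnc ⟨hd, hsep⟩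
    unfold isDomSet at hnd
    push_neg at hnd
    obtain ⟨v, hv, hvall⟩ := hnd
    refine ⟨v, hv, fun y hy => ?_⟩
    have hny : ¬ Gᶜ.Adj v y := hvall y hy
    rw [compl_adj] at hny
    push_neg at hny
    exact hny (fun h => hv (h ▸ hy))
  obtain ⟨u₀, hu₀, hadj₀⟩ := hdom
  have hu₀mem : u₀ ∈ U ∪ W := huniv ▸ Set.mem_univ u₀
  rcases hu₀mem with hu₀U | hu₀W
  · -- T ⊆ W, then T = W
    right
    have hTW : T ⊆ W := by
      intro y hy
      rcases hadj (hadj₀ y hy) with ⟨_, h⟩ | ⟨h, _⟩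
      · exact h
      · exact absurd hu₀U (Set.disjoint_right.1 hdisj h)
    apply Set.Subset.antisymm hTW
    intro w hw
    by_contra hwT
    obtain ⟨y, hyT, hadjw⟩ := hT.1 w hwT
    rcases hadj hadjw with ⟨h1, _⟩ | ⟨_, h2⟩
    · exact Set.disjoint_left.1 hdisj h1 hw
    · exact Set.disjoint_left.1 hdisj h2 (hTW hyT)
  · -- T ⊆ U, then T = U
    left
    have hTU : T ⊆ U := by
      intro y hy
      rcases hadj (hadj₀ y hy) with ⟨h, _⟩ | ⟨_, h⟩
      · exact absurd hu₀W (Set.disjoint_left.1 hdisj h)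
      · exact h
    apply Set.Subset.antisymm hTU
    intro w hw
    by_contra hwT
    obtain ⟨y, hyT, hadjw⟩ := hT.1 w hwT
    rcases hadj hadjw with ⟨_, h2⟩ | ⟨h1, _⟩
    · exact Set.disjoint_left.1 hdisj (hTU hyT) h2
    · exact Set.disjoint_left.1 hdisj hw h1

end Graph

section OneSide
set_option linter.unusedSectionVars false

variable {V : Type*} [Fintype V]

lemma ldNum_le' (G : SimpleGraph V) {S : Set V} (h : isLDSet G S) : ldNum G ≤ S.ncard :=
  Nat.sInf_le ⟨S, h, rfl⟩

/-- The failure of the swap set `(U \ {u}) ∪ {w}` to be an LD-set yields a leaf or a pair. -/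
lemma swap_failure {G : SimpleGraph V} {U W : Set V} (hbip : bipartiteWith G U W)
    (hU2 : 2 ≤ U.ncard)
    (hUld : isLDSet G U) (hmin : U.ncard = ldNum G)
    (hEvery : ∀ T : Set V, isLDSet G T → T.ncard = ldNum G → T = U ∨ T = W)
    {u : V} (hu : u ∈ U) {w : V} (huw : G.Adj u w) :
    (∃ w', w' ∈ W ∧ w' ≠ w ∧ G.neighborSet w' ∩ U = {u}) ∨
    (∃ w₁ w₂, w₁ ∈ W ∧ w₂ ∈ W ∧ w₁ ≠ w₂ ∧ w₁ ≠ w ∧ w₂ ≠ w ∧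
      G.neighborSet w₁ ∩ (U \ {u}) = G.neighborSet w₂ ∩ (U \ {u})) := by
  obtain ⟨huniv, hdisj, hadj⟩ := hbip
  have hwW : w ∈ W := by
    rcases hadj huw with ⟨_, h⟩ | ⟨h, _⟩
    · exact h
    · exact absurd hu (Set.disjoint_right.1 hdisj h)
  have hwU : w ∉ U := Set.disjoint_right.1 hdisj hwW
  by_contra hcon
  push_neg at hcon
  obtain ⟨hnleaf, hnpair⟩ := hcon
  set T : Set V := insert w (U \ {u}) with hT
  -- membership facts
  have huT : u ∉ T := by
    rw [hT]
    rintro (h | h)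
    · exact hwU (h ▸ hu)
    · exact h.2 rfl
  have hwT : w ∈ T := Set.mem_insert _ _
  have hsubT : U \ {u} ⊆ T := Set.subset_insert _ _
  -- every vertex outside T is u or in W \ {w}
  have hpos : ∀ v, v ∉ T → v = u ∨ (v ∈ W ∧ v ≠ w) := by
    intro v hv
    have : v ∈ U ∪ W := huniv ▸ Set.mem_univ v
    rcases this with hvU | hvW
    · left
      by_contra hne
      exact hv (hsubT ⟨hvU, hne⟩)
    · right
      exact ⟨hvW, fun h => hv (h ▸ hwT)⟩
  -- traces of W-vertices on T
  have htrace : ∀ v, v ∈ W → G.neighborSet v ∩ T = G.neighborSet v ∩ (U \ {u}) := by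
    intro v hvW
    ext x
    simp only [Set.mem_inter_iff, mem_neighborSet, hT, Set.mem_insert_iff]
    constructor
    · rintro ⟨hvx, (rfl | hx)⟩
      · exfalso
        rcases hadj hvx with ⟨h1, _⟩ | ⟨_, h2⟩
        · exact Set.disjoint_left.1 hdisj h1 hvW
        · exact Set.disjoint_left.1 hdisj h2 hwW
      · exact ⟨hvx, hx⟩
    · rintro ⟨hvx, hx⟩
      exact ⟨hvx, Or.inr hx⟩
  -- trace of u on T is {w}
  have htraceu : G.neighborSet u ∩ T = {w} := by
    ext x
    simp only [Set.mem_inter_iff, mem_neighborSet, hT, Set.mem_insert_iff, Set.mem_singleton_iff]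
    constructor
    · rintro ⟨hux, (rfl | hx)⟩
      · rfl
      · exfalso
        rcases hadj hux with ⟨_, h2⟩ | ⟨h1, _⟩
        · exact Set.disjoint_left.1 hdisj hx.1 h2
        · exact Set.disjoint_left.1 hdisj hu h1
    · rintro rfl
      exact ⟨huw, Or.inl rfl⟩
  -- nonempty neighborhoods in U for W-vertices
  have hnon : ∀ v, v ∈ W → ∃ y, y ∈ G.neighborSet v ∩ U := by
    intro v hvW
    obtain ⟨y, hyU, hyadj⟩ := hUld.1 v (Set.disjoint_right.1 hdisj hvW)
    exact ⟨y, hyadj, hyU⟩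
  -- T is an LD-set
  have hTld : isLDSet G T := by
    constructor
    · -- domination
      intro v hv
      rcases hpos v hv with rfl | ⟨hvW, hvw⟩
      · exact ⟨w, hwT, huw⟩
      · have hvne : G.neighborSet v ∩ U ≠ {u} := hnleaf v hvW hvw
        obtain ⟨y, hy⟩ := hnon v hvW
        have : ∃ z, z ∈ G.neighborSet v ∩ U ∧ z ≠ u := by
          by_contra hall
          push_neg at hall
          apply hvne
          apply Set.Subset.antisymm
          · intro z hz
            exact hall z hz
          · intro z hz
            rw [Set.mem_singleton_iff] at hz
            rw [hz, ← hall y hy]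
            exact hy
        obtain ⟨z, hz, hzu⟩ := this
        exact ⟨z, hsubT ⟨hz.2, hzu⟩, hz.1⟩
    · -- separation
      intro v₁ hv₁ v₂ hv₂ hne hEq
      rcases hpos v₁ hv₁ with h1 | ⟨hv₁W, hv₁w⟩
      · rcases hpos v₂ hv₂ with h2 | ⟨hv₂W, hv₂w⟩
        · exact hne (h1.trans h2.symm)
        · subst h1
          rw [htraceu, htrace v₂ hv₂W] at hEq
          have hmem : w ∈ G.neighborSet v₂ ∩ (U \ {v₁}) := by
            rw [← hEq]; exact rfl
          exact hwU hmem.2.1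
      · rcases hpos v₂ hv₂ with h2 | ⟨hv₂W, hv₂w⟩
        · subst h2
          rw [htraceu, htrace v₁ hv₁W] at hEq
          have hmem : w ∈ G.neighborSet v₁ ∩ (U \ {v₂}) := by
            rw [hEq]; exact rfl
          exact hwU hmem.2.1
        · rw [htrace v₁ hv₁W, htrace v₂ hv₂W] at hEq
          exact hnpair v₁ v₂ hv₁W hv₂W hne hv₁w hv₂w hEq
  -- cardinality of T
  have hTcard : T.ncard = U.ncard := by
    have h1 : w ∉ U \ {u} := fun h => hwU h.1
    have h2 : (U \ {u}).Finite := Set.toFinite _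
    rw [hT, Set.ncard_insert_of_notMem h1 h2]
    have h3 : (U \ {u}).ncard + 1 = U.ncard :=
      Set.ncard_diff_singleton_add_one (s := U) hu (Set.toFinite U)
    omega
  -- conclude
  rcases hEvery T hTld (by rw [hTcard, hmin]) with hTeq | hTeq
  · exact hwU (hTeq ▸ hwT)
  · obtain ⟨u', hu'U, hu'u⟩ := Set.exists_ne_of_one_lt_ncard (s := U) (by omega) u
    have : u' ∈ T := hsubT ⟨hu'U, hu'u⟩
    rw [hTeq] at this
    exact Set.disjoint_left.1 hdisj hu'U this

end OneSide

section OneSide2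
set_option linter.unusedSectionVars false
set_option maxHeartbeats 1000000

variable {V : Type*} [Fintype V] [DecidableEq V]

lemma insert_of_erase_eq {f g : Finset V} {u : V} (h : f.erase u = g.erase u)
    (hg : u ∈ g) (hf : u ∉ f) : insert u f = g := by
  ext a
  by_cases ha : a = u
  · subst ha; simp [hg]
  · rw [Finset.mem_insert]
    constructor
    · rintro (h' | h')
      · exact absurd h' ha
      · have : a ∈ f.erase u := Finset.mem_erase.2 ⟨ha, h'⟩
        rw [h] at this
        exact (Finset.mem_erase.1 this).2
    · intro h'
      have : a ∈ g.erase u := Finset.mem_erase.2 ⟨ha, h'⟩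
      rw [← h] at this
      exact Or.inr (Finset.mem_erase.1 this).2

lemma eq_of_erase_eq {f g : Finset V} {u : V} (h : f.erase u = g.erase u)
    (hst : u ∈ f ↔ u ∈ g) : f = g := by
  ext a
  by_cases ha : a = u
  · subst ha; exact hst
  · constructor <;> intro h'
    · have : a ∈ f.erase u := Finset.mem_erase.2 ⟨ha, h'⟩
      rw [h] at this; exact (Finset.mem_erase.1 this).2
    · have : a ∈ g.erase u := Finset.mem_erase.2 ⟨ha, h'⟩
      rw [← h] at this; exact (Finset.mem_erase.1 this).2

lemma oneside {G : SimpleGraph V} {U W : Set V} (hbip : bipartiteWith G U W)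
    (hconn : G.Connected) (hU2 : 2 ≤ U.ncard)
    (hUld : isLDSet G U) (hmin : U.ncard = ldNum G)
    (hEvery : ∀ T : Set V, isLDSet G T → T.ncard = ldNum G → T = U ∨ T = W) :
    3 * U.ncard ≤ 2 * W.ncard := by
  classical
  have hdisj := hbip.2.1
  have hadj := hbip.2.2
  have hWU : ∀ {w : V}, w ∈ W → w ∉ U := fun hw => Set.disjoint_right.1 hdisj hw
  have hUW : ∀ {x : V}, x ∈ U → x ∉ W := fun hx => Set.disjoint_left.1 hdisj hx
  set Uf : Finset V := (Set.toFinite U).toFinset with hUf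
  set Wf : Finset V := (Set.toFinite W).toFinset with hWf
  set nbr : V → Finset V := fun w => (Set.toFinite (G.neighborSet w ∩ U)).toFinset with hnbr
  have hnbr_mem : ∀ w a, a ∈ nbr w ↔ G.Adj w a ∧ a ∈ U := by
    intro w a
    rw [hnbr]
    simp only [Set.Finite.mem_toFinset, Set.mem_inter_iff, SimpleGraph.mem_neighborSet]
  have hnbr_eq : ∀ w w', nbr w = nbr w' → G.neighborSet w ∩ U = G.neighborSet w' ∩ U := by
    intro w w' h
    rw [hnbr] at h
    exact (Set.Finite.toFinset_inj).1 h
  have hset_nbr : ∀ w w', G.neighborSet w ∩ U = G.neighborSet w' ∩ U → nbr w = nbr w' := by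
    intro w w' h
    rw [hnbr]
    exact Set.Finite.toFinset_inj.2 h
  have hinj : ∀ w ∈ W, ∀ w' ∈ W, nbr w = nbr w' → w = w' := by
    intro w hw w' hw' heq
    by_contra hne
    exact hUld.2 w (hWU hw) w' (hWU hw') hne (hnbr_eq w w' heq)
  have hnonW : ∀ w ∈ W, (nbr w).Nonempty := by
    intro w hw
    obtain ⟨y, hyU, hyadj⟩ := hUld.1 w (hWU hw)
    exact ⟨y, (hnbr_mem w y).2 ⟨hyadj, hyU⟩⟩
  have hneighbor : ∀ u ∈ U, ∃ w, w ∈ W ∧ G.Adj u w := by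
    intro u hu
    obtain ⟨u', hu'U, hu'ne⟩ := Set.exists_ne_of_one_lt_ncard (s := U) (by omega) u
    obtain ⟨p⟩ := hconn.preconnected u u'
    cases p with
    | nil => exact absurd rfl hu'ne.symm
    | cons h _ =>
      rename_i b _
      rcases hadj h with ⟨_, hbW⟩ | ⟨huW, _⟩
      · exact ⟨b, hbW, h⟩
      · exact absurd huW (hUW hu)
  set A : Finset (Finset V) := Wf.image nbr with hA
  have hmemA : ∀ w ∈ W, nbr w ∈ A := by
    intro w hw
    rw [hA]
    exact Finset.mem_image_of_mem _ (by rw [hWf, Set.Finite.mem_toFinset]; exact hw)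
  have hAmem : ∀ f ∈ A, ∃ w, w ∈ W ∧ nbr w = f := by
    intro f hf
    rw [hA] at hf
    obtain ⟨w, hw, heq⟩ := Finset.mem_image.1 hf
    rw [hWf, Set.Finite.mem_toFinset] at hw
    exact ⟨w, hw, heq⟩
  -- a pair with traces equal off u yields a u-edge of the family
  have hpair_edge : ∀ u ∈ U, ∀ w₁ w₂, w₁ ∈ W → w₂ ∈ W → w₁ ≠ w₂ →
      G.neighborSet w₁ ∩ (U \ {u}) = G.neighborSet w₂ ∩ (U \ {u}) →
      ∃ y, LDComb.uEdge A u y ∧ ∃ wa, wa ∈ W ∧ (wa = w₁ ∨ wa = w₂) ∧ insert u y = nbr wa := by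
    intro u hu w₁ w₂ hw₁ hw₂ hne hpair
    have htr : (nbr w₁).erase u = (nbr w₂).erase u := by
      ext a
      have hpt := Set.ext_iff.1 hpair a
      simp only [Set.mem_inter_iff, SimpleGraph.mem_neighborSet, Set.mem_diff,
        Set.mem_singleton_iff] at hpt
      simp only [Finset.mem_erase, hnbr_mem]
      tauto
    by_cases h1 : u ∈ nbr w₁ <;> by_cases h2 : u ∈ nbr w₂
    · exact absurd (hinj w₁ hw₁ w₂ hw₂ (eq_of_erase_eq htr (by tauto))) hne
    · refine ⟨nbr w₂, ⟨h2, hmemA w₂ hw₂, ?_⟩, w₁, hw₁, Or.inl rfl, ?_⟩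
      · rw [insert_of_erase_eq htr.symm h1 h2]
        exact hmemA w₁ hw₁
      · exact insert_of_erase_eq htr.symm h1 h2
    · refine ⟨nbr w₁, ⟨h1, hmemA w₁ hw₁, ?_⟩, w₂, hw₂, Or.inr rfl, ?_⟩
      · rw [insert_of_erase_eq htr h2 h1]
        exact hmemA w₂ hw₂
      · exact insert_of_erase_eq htr h2 h1
    · exact absurd (hinj w₁ hw₁ w₂ hw₂ (eq_of_erase_eq htr (by tauto))) hne
  -- every direction has an edge
  have hedge : ∀ u ∈ U, ∃ y, LDComb.uEdge A u y := by
    intro u hu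
    obtain ⟨w₀, hw₀W, hadj₀⟩ := hneighbor u hu
    rcases swap_failure hbip hU2 hUld hmin hEvery hu hadj₀ with
      ⟨w', hw'W, hw'ne, hw'leaf⟩ | ⟨w₁, w₂, hw₁W, hw₂W, h12, _, _, hpair⟩
    · have hadj' : G.Adj u w' := by
        have hmem : u ∈ G.neighborSet w' ∩ U := by rw [hw'leaf]; exact rfl
        exact hmem.1.symm
      rcases swap_failure hbip hU2 hUld hmin hEvery hu hadj' with
        ⟨w'', hw''W, hw''ne, hw''leaf⟩ | ⟨w₁, w₂, hw₁W, hw₂W, h12, _, _, hpair⟩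
      · exfalso
        apply hw''ne
        apply hinj w'' hw''W w' hw'W
        apply hset_nbr
        rw [hw''leaf, hw'leaf]
      · obtain ⟨y, hy, _⟩ := hpair_edge u hu w₁ w₂ hw₁W hw₂W h12 hpair
        exact ⟨y, hy⟩
    · obtain ⟨y, hy, _⟩ := hpair_edge u hu w₁ w₂ hw₁W hw₂W h12 hpair
      exact ⟨y, hy⟩
  -- goodness
  have hgood : ∀ u ∈ Uf, LDComb.Good A u := by
    intro u huf
    have hu : u ∈ U := by rwa [hUf, Set.Finite.mem_toFinset] at huf
    obtain ⟨y, hy⟩ := hedge u hu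
    obtain ⟨w₁, hw₁W, hw₁eq⟩ := hAmem _ hy.2.2
    have hadj₁ : G.Adj u w₁ := by
      have hmem : u ∈ nbr w₁ := by rw [hw₁eq]; exact Finset.mem_insert_self _ _
      exact ((hnbr_mem w₁ u).1 hmem).1.symm
    rcases swap_failure hbip hU2 hUld hmin hEvery hu hadj₁ with
      ⟨w', hw'W, hw'ne, hw'leaf⟩ | ⟨wa, wb, hwaW, hwbW, hab, haw, hbw, hpair⟩
    · right
      constructor
      · have hfin : nbr w' = {u} := by
          ext a
          rw [hnbr_mem]
          have hpt := Set.ext_iff.1 hw'leaf a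
          simp only [Set.mem_inter_iff, SimpleGraph.mem_neighborSet,
            Set.mem_singleton_iff] at hpt
          simp only [Finset.mem_singleton]
          exact hpt
        rw [← hfin]
        exact hmemA w' hw'W
      · exact ⟨y, hy⟩
    · obtain ⟨y', hy', wa', hwa'W, hor, hup⟩ := hpair_edge u hu wa wb hwaW hwbW hab hpair
      left
      refine ⟨y, y', hy, hy', ?_⟩
      intro hcol
      have hnn : nbr wa' = nbr w₁ := by
        rw [← hup, ← hcol, hw₁eq]
      have hweq := hinj wa' hwa'W w₁ hw₁W hnn
      rcases hor with rfl | rfl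
      · exact haw hweq
      · exact hbw hweq
  -- counting
  have hAcard : A.card = Wf.card := by
    rw [hA]
    apply Finset.card_image_of_injOn
    intro w hw w' hw' h
    simp only [Finset.coe_sort_coe, Finset.mem_coe, hWf, Set.Finite.mem_toFinset] at hw hw'
    exact hinj w hw w' hw' h
  have hnoempty : (∅ : Finset V) ∉ A := by
    intro h
    obtain ⟨w, hwW, heq⟩ := hAmem ∅ h
    have hne := hnonW w hwW
    rw [heq] at hne
    exact Finset.not_nonempty_empty hne
  have hmain := Main.comb_main (A.sum Finset.card) A Uf le_rfl hnoempty hgood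
  have hUcard : Uf.card = U.ncard := by
    rw [hUf]
    exact (Set.ncard_eq_toFinset_card U (Set.toFinite U)).symm
  have hWcard : Wf.card = W.ncard := by
    rw [hWf]
    exact (Set.ncard_eq_toFinset_card W (Set.toFinite W)).symm
  omega

end OneSide2
section Final
set_option linter.unusedSectionVars false

variable {V : Type*} [Fintype V]

lemma powerset_bound {G : SimpleGraph V} {U W : Set V} (hbip : bipartiteWith G U W)
    (hUld : isLDSet G U) : W.ncard ≤ 2 ^ U.ncard - 1 := by
  classical
  have hdisj := hbip.2.1
  have hWU : ∀ {w : V}, w ∈ W → w ∉ U := fun hw => Set.disjoint_right.1 hdisj hw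
  set Uf : Finset V := (Set.toFinite U).toFinset with hUf
  set Wf : Finset V := (Set.toFinite W).toFinset with hWf
  set nbr : V → Finset V := fun w => (Set.toFinite (G.neighborSet w ∩ U)).toFinset with hnbr
  have hnbr_mem : ∀ w a, a ∈ nbr w ↔ G.Adj w a ∧ a ∈ U := by
    intro w a
    rw [hnbr]
    simp only [Set.Finite.mem_toFinset, Set.mem_inter_iff, SimpleGraph.mem_neighborSet]
  have hmaps : ∀ w ∈ Wf, nbr w ∈ Uf.powerset.erase ∅ := by
    intro w hw
    rw [hWf, Set.Finite.mem_toFinset] at hw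
    rw [Finset.mem_erase, Finset.mem_powerset]
    constructor
    · obtain ⟨y, hyU, hyadj⟩ := hUld.1 w (hWU hw)
      intro hemp
      have : y ∈ nbr w := (hnbr_mem w y).2 ⟨hyadj, hyU⟩
      rw [hemp] at this
      exact absurd this (Finset.notMem_empty y)
    · intro a ha
      rw [hUf, Set.Finite.mem_toFinset]
      exact ((hnbr_mem w a).1 ha).2
  have hinj : Set.InjOn nbr ↑Wf := by
    intro w hw w' hw' heq
    simp only [Finset.mem_coe, hWf, Set.Finite.mem_toFinset] at hw hw'
    by_contra hne
    apply hUld.2 w (hWU hw) w' (hWU hw') hne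
    rw [hnbr] at heq
    exact (Set.Finite.toFinset_inj).1 heq
  have hcard := Finset.card_le_card_of_injOn nbr hmaps hinj
  have h1 : (Uf.powerset.erase ∅).card = 2 ^ Uf.card - 1 := by
    rw [Finset.card_erase_of_mem (Finset.empty_mem_powerset _), Finset.card_powerset]
  have hUcard : Uf.card = U.ncard := by
    rw [hUf]; exact (Set.ncard_eq_toFinset_card U (Set.toFinite U)).symm
  have hWcard : Wf.card = W.ncard := by
    rw [hWf]; exact (Set.ncard_eq_toFinset_card W (Set.toFinite W)).symm
  rw [hUcard] at h1
  omega

end Final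

theorem stmt16 {V : Type*} [Fintype V] (G : SimpleGraph V) (U W : Set V) (r s : ℕ)
    (hconn : G.Connected) (hbip : bipartiteWith G U W)
    (hU : U.ncard = r) (hW : W.ncard = s)
    (hrs : r ≤ s) (hn : 4 ≤ r + s)
    (hr : 3 ≤ r) (hlam : ldNum Gᶜ = ldNum G + 1) :
    3 * r ≤ 2 * s ∧ s ≤ 2 ^ r - 1 := by
  classical
  have hbip' : bipartiteWith G W U := by
    refine ⟨by rw [Set.union_comm]; exact hbip.1, hbip.2.1.symm, fun u v h => ?_⟩
    exact (hbip.2.2 h).symm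
  have hEvery := min_ld_part hbip hlam
  obtain ⟨S, hSld, hScard⟩ := ldNum_exists G
  rcases hEvery S hSld hScard with rfl | rfl
  · -- S = U : the LD part is U
    have h1 : 3 * S.ncard ≤ 2 * W.ncard :=
      oneside hbip hconn (by omega) hSld hScard hEvery
    have h2 : W.ncard ≤ 2 ^ S.ncard - 1 := powerset_bound hbip hSld
    constructor
    · omega
    · rw [← hU, ← hW]; exact h2
  · -- S = W : contradiction
    have hEvery' : ∀ T : Set V, isLDSet G T → T.ncard = ldNum G → T = S ∨ T = U :=
      fun T h1 h2 => (hEvery T h1 h2).symm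
    have h1 : 3 * S.ncard ≤ 2 * U.ncard :=
      oneside hbip' hconn (by omega) hSld hScard hEvery'
    exfalso
    omega
end
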